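/- Let (X, μ) be a measure space and let s, q : X → ℝ be probability densities with respect to μ, with q > 0 μ-a.e., such that (s−q)²/q is μ-integrable. For every γ ∈ (0,1], with y_γ := (1−γ)·q + γ·s, one has (2/γ²)·∫ y_γ·log(y_γ/q) dμ ≤ 2·∫ (s−q)²/q dμ. In particular, sup_{γ∈(0,1]} (2/γ²)·D_KL(y_γ‖q) is finite. -/

import Mathlib

open MeasureTheory

lemma kl_ptwise (y q : ℝ) (hq : 0 < q) (hy : 0 ≤ y) :
    y - q ≤ y * Real.log (y / q) ∧
      y * Real.log (y / q) ≤ (y - q) ^ 2 / q + (y - q) := by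
  rcases eq_or_lt_of_le hy with h0 | h0
  · have hq2 : (0 - q) ^ 2 / q = q := by field_simp; ring
    simp only [← h0, zero_div, Real.log_zero, mul_zero, zero_mul, hq2]
    constructor <;> linarith
  · have hlog1 : Real.log (y / q) ≤ y / q - 1 :=
      Real.log_le_sub_one_of_pos (div_pos h0 hq)
    have hlog2 : Real.log (q / y) ≤ q / y - 1 :=
      Real.log_le_sub_one_of_pos (div_pos hq h0)
    have heq : Real.log (y / q) = -(Real.log (q / y)) := by
      rw [Real.log_div h0.ne' hq.ne', Real.log_div hq.ne' h0.ne']; ring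
    constructor
    · have h2 : 1 - q / y ≤ Real.log (y / q) := by rw [heq]; linarith
      have h3 : y * (1 - q / y) ≤ y * Real.log (y / q) :=
        mul_le_mul_of_nonneg_left h2 hy
      have h4 : y * (1 - q / y) = y - q := by field_simp
      linarith
    · have h1 : y * Real.log (y / q) ≤ y * (y / q - 1) :=
        mul_le_mul_of_nonneg_left hlog1 hy
      have h2 : y * (y / q - 1) = (y - q) ^ 2 / q + (y - q) := by
        field_simp; ring
      linarith

/-- Quantitative core of Theorem 2: for probability densities `s, q` with `q > 0` a.e.
and `(s-q)²/q` integrable, writing `y_γ = (1-γ)q + γs`, the Frank-Wolfe curvature ratio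
`(2/γ²) D_KL(y_γ‖q)` is bounded by twice the χ² divergence `∫ (s-q)²/q dμ` uniformly in
`γ ∈ (0,1]`; in particular its supremum over `γ ∈ (0,1]` is finite. -/
theorem kl_curvature_ratio_bounded
    {X : Type*} [MeasurableSpace X] (μ : Measure X)
    (s q : X → ℝ) (hs : Measurable s) (hq : Measurable q)
    (hsnn : ∀ᵐ x ∂μ, 0 ≤ s x) (hqpos : ∀ᵐ x ∂μ, 0 < q x)
    (hsone : ∫ x, s x ∂μ = 1) (hqone : ∫ x, q x ∂μ = 1)
    (hchi : Integrable (fun x => (s x - q x) ^ 2 / q x) μ) :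
    (∀ γ ∈ Set.Ioc (0 : ℝ) 1,
      (2 / γ ^ 2) * ∫ x, ((1 - γ) * q x + γ * s x) *
          Real.log (((1 - γ) * q x + γ * s x) / q x) ∂μ
        ≤ 2 * ∫ x, (s x - q x) ^ 2 / q x ∂μ) ∧
    BddAbove ((fun γ : ℝ => (2 / γ ^ 2) *
        ∫ x, ((1 - γ) * q x + γ * s x) *
          Real.log (((1 - γ) * q x + γ * s x) / q x) ∂μ) '' Set.Ioc (0 : ℝ) 1) := by
  have hsint : Integrable s μ := by
    by_contra h
    rw [integral_undef h] at hsone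
    norm_num at hsone
  have hqint : Integrable q μ := by
    by_contra h
    rw [integral_undef h] at hqone
    norm_num at hqone
  have hdiff : Integrable (fun x => s x - q x) μ := hsint.sub hqint
  have main : ∀ γ ∈ Set.Ioc (0 : ℝ) 1,
      (2 / γ ^ 2) * ∫ x, ((1 - γ) * q x + γ * s x) *
          Real.log (((1 - γ) * q x + γ * s x) / q x) ∂μ
        ≤ 2 * ∫ x, (s x - q x) ^ 2 / q x ∂μ := by
    intro γ hγ
    obtain ⟨hγ0, hγ1⟩ := hγ
    set f : X → ℝ := fun x => ((1 - γ) * q x + γ * s x) *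
        Real.log (((1 - γ) * q x + γ * s x) / q x) with hf
    set g : X → ℝ := fun x => γ ^ 2 * ((s x - q x) ^ 2 / q x) + γ * (s x - q x)
      with hg
    -- pointwise bounds a.e.
    have hpt : ∀ᵐ x ∂μ, γ * (s x - q x) ≤ f x ∧ f x ≤ g x := by
      filter_upwards [hsnn, hqpos] with x hsx hqx
      set y := (1 - γ) * q x + γ * s x with hy
      have hynn : 0 ≤ y := by
        have h1 : 0 ≤ (1 - γ) * q x := mul_nonneg (by linarith) hqx.le
        have h2 : 0 ≤ γ * s x := mul_nonneg hγ0.le hsx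
        positivity
      obtain ⟨hl, hu⟩ := kl_ptwise y (q x) hqx hynn
      have hyq : y - q x = γ * (s x - q x) := by rw [hy]; ring
      have hsq : (y - q x) ^ 2 / q x = γ ^ 2 * ((s x - q x) ^ 2 / q x) := by
        rw [hyq]; field_simp
      constructor
      · calc γ * (s x - q x) = y - q x := hyq.symm
          _ ≤ y * Real.log (y / q x) := hl
      · calc y * Real.log (y / q x) ≤ (y - q x) ^ 2 / q x + (y - q x) := hu
          _ = g x := by rw [hsq, hyq]
    have hgint : Integrable g μ :=
      (hchi.const_mul _).add (hdiff.const_mul _)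
    have hfmeas : AEStronglyMeasurable f μ := by
      apply Measurable.aestronglyMeasurable
      exact ((hq.const_mul _).add (hs.const_mul _)).mul
        (Real.measurable_log.comp (((hq.const_mul _).add (hs.const_mul _)).div hq))
    have hfint : Integrable f μ := by
      have hbound : Integrable
          (fun x => γ ^ 2 * ((s x - q x) ^ 2 / q x) + 2 * |γ * (s x - q x)|) μ :=
        (hchi.const_mul _).add ((((hdiff.const_mul γ)).abs).const_mul 2)
      apply Integrable.mono' hbound hfmeas
      filter_upwards [hpt, hsnn, hqpos] with x ⟨hl, hu⟩ hsx hqx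
      rw [Real.norm_eq_abs, abs_le]
      have hgx : g x = γ ^ 2 * ((s x - q x) ^ 2 / q x) + γ * (s x - q x) := rfl
      rw [hgx] at hu
      have hg0 : 0 ≤ γ ^ 2 * ((s x - q x) ^ 2 / q x) := by positivity
      have h1 := neg_abs_le (γ * (s x - q x))
      have h2 := le_abs_self (γ * (s x - q x))
      constructor <;> linarith
    have hint_le : ∫ x, f x ∂μ ≤ ∫ x, g x ∂μ :=
      integral_mono_ae hfint hgint (hpt.mono fun x hx => hx.2)
    have hgval : ∫ x, g x ∂μ = γ ^ 2 * ∫ x, (s x - q x) ^ 2 / q x ∂μ := by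
      simp only [hg]
      rw [integral_add (hchi.const_mul _) (hdiff.const_mul _),
        integral_const_mul, integral_const_mul, integral_sub hsint hqint,
        hsone, hqone]
      ring
    have hγ2 : (0:ℝ) < γ ^ 2 := by positivity
    have h1 : ∫ x, f x ∂μ ≤ γ ^ 2 * ∫ x, (s x - q x) ^ 2 / q x ∂μ := by
      rw [← hgval]; exact hint_le
    have h2 : (2 / γ ^ 2) * ∫ x, f x ∂μ ≤
        (2 / γ ^ 2) * (γ ^ 2 * ∫ x, (s x - q x) ^ 2 / q x ∂μ) :=
      mul_le_mul_of_nonneg_left h1 (by positivity)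
    calc (2 / γ ^ 2) * ∫ x, f x ∂μ
        ≤ (2 / γ ^ 2) * (γ ^ 2 * ∫ x, (s x - q x) ^ 2 / q x ∂μ) := h2
      _ = 2 * ∫ x, (s x - q x) ^ 2 / q x ∂μ := by field_simp
  refine ⟨main, ⟨2 * ∫ x, (s x - q x) ^ 2 / q x ∂μ, ?_⟩⟩
  rintro _ ⟨γ, hγ, rfl⟩
  exact main γ hγ
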